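/- Assume hypotheses (H₁), (H₂), (H₃) hold for f̃ and the horizontal lines Γ₀, Γ₁, Γ₂, and let x ∈ Θ(Ã₀). Then the sequence (f̃⁻ⁿ(Λ₀⁻(x)))_{n∈ℕ} is uniformly bounded to the right: for every real number M there exists n₀ ∈ ℕ such that for every integer n ≥ n₀, f̃⁻ⁿ(Λ₀⁻(x)) ⊆ {z̃ ∈ Ã₀ : p₁(z̃) < M}. -/

import Mathlib

open Set Function Topology

noncomputable section

/-- The deck transformation `T(x,y) = (x+1, y)` of the universal covering of the annulus. -/
def deckT : Equiv.Perm (ℝ × ℝ) where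
  toFun p := (p.1 + 1, p.2)
  invFun p := (p.1 - 1, p.2)
  left_inv p := by simp
  right_inv p := by simp

/-- `g` is isotopic to the identity (in particular orientation preserving). -/
def IsotopicToIdP (g : ℝ × ℝ → ℝ × ℝ) : Prop :=
  ∃ H : ℝ × (ℝ × ℝ) → ℝ × ℝ, Continuous H ∧ (∀ z, H (0, z) = z) ∧ (∀ z, H (1, z) = g z) ∧
    ∀ t : ℝ, IsHomeomorph fun z => H (t, z)

/-- The closed horizontal band `ℝ × [b, a]`. -/
def BandAB (a b : ℝ) : Set (ℝ × ℝ) := {p | b ≤ p.2 ∧ p.2 ≤ a}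

/-- The horizontal line `Γ = ℝ × {c}`. -/
def Horiz (c : ℝ) : Set (ℝ × ℝ) := {p | p.2 = c}

/-- The maximal `f̃`-invariant subset `Θ(Ẽ) = ⋂_{n ∈ ℤ} f̃ⁿ(Ẽ)`. -/
def ThetaZ (ftil : Equiv.Perm (ℝ × ℝ)) (E : Set (ℝ × ℝ)) : Set (ℝ × ℝ) :=
  ⋂ n : ℤ, (ftil ^ n) '' E

/-- The rotation set `ρ_{K̃}(f̃)` of a set `K̃ ⊆ ℝ²`. -/
def rhoB (ftil : Equiv.Perm (ℝ × ℝ)) (K : Set (ℝ × ℝ)) : Set EReal :=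
  ⋂ (m : ℕ), ⋂ (_ : 1 ≤ m), closure (⋃ (n : ℕ), ⋃ (_ : m ≤ n),
    {x : EReal | ∃ zt ∈ K, (ftil ^ n) zt ∈ K ∧
      x = (((((ftil ^ n) zt).1 - zt.1) / n : ℝ) : EReal)})

/-- The unstable set `Λ⁻` of the band `ℝ × [b, a]`. -/
def LamM (ftil : Equiv.Perm (ℝ × ℝ)) (a b : ℝ) : Set (ℝ × ℝ) :=
  ⋂ n : ℕ, ((ftil ^ n) '' {p : ℝ × ℝ | p.2 ≤ a} ∩ {p : ℝ × ℝ | b ≤ p.2})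

/-- The stable set `Λ⁺` of the band `ℝ × [b, a]`. -/
def LamP (ftil : Equiv.Perm (ℝ × ℝ)) (a b : ℝ) : Set (ℝ × ℝ) :=
  ⋂ n : ℕ, ({p : ℝ × ℝ | p.2 ≤ a} ∩ (ftil ^ n) ⁻¹' {p : ℝ × ℝ | b ≤ p.2})

open Set Metric

-- ============ small Equiv.Perm helpers ============
lemma BIB_mul_apply {α : Type*} (σ τ : Equiv.Perm α) (u : α) : (σ * τ) u = σ (τ u) := rfl

lemma BIB_zpow_zpow {α : Type*} (σ : Equiv.Perm α) (j l : ℤ) (u : α) :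
    (σ^j) ((σ^l) u) = (σ^(j+l)) u := by
  rw [← BIB_mul_apply, ← zpow_add]

lemma BIB_invpow_eq {α : Type*} (σ : Equiv.Perm α) (n : ℕ) :
    (σ⁻¹ ^ n) = σ^(-(n:ℤ)) := by
  rw [inv_pow, ← zpow_natCast, ← zpow_neg]

lemma BIB_pow_natCast {α : Type*} (σ : Equiv.Perm α) (n : ℕ) : σ^(n:ℤ) = σ^n := zpow_natCast σ n

lemma BIB_invpow_pow {α : Type*} (σ : Equiv.Perm α) (n : ℕ) (u : α) :
    (σ⁻¹ ^ n) ((σ^n) u) = u := by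
  rw [inv_pow]
  exact Equiv.symm_apply_apply _ _

lemma BIB_pow_invpow {α : Type*} (σ : Equiv.Perm α) (n : ℕ) (u : α) :
    (σ^n) ((σ⁻¹ ^ n) u) = u := by
  rw [inv_pow]
  exact Equiv.apply_symm_apply _ _

lemma BIB_invpow_pow_succ {α : Type*} (σ : Equiv.Perm α) (n : ℕ) (u : α) :
    (σ⁻¹ ^ n) ((σ^(n+1)) u) = σ u := by
  rw [pow_succ, BIB_mul_apply, BIB_invpow_pow]

lemma BIB_pow_succ_apply {α : Type*} (σ : Equiv.Perm α) (n : ℕ) (u : α) :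
    (σ^(n+1)) u = σ ((σ^n) u) := by
  rw [pow_succ', BIB_mul_apply]

lemma BIB_pow_cont (σ : Equiv.Perm (ℝ×ℝ)) (hσ : Continuous σ) :
    ∀ n : ℕ, Continuous ⇑(σ^n) := by
  intro n
  induction n with
  | zero => simpa using continuous_id
  | succ k ih =>
      have : ⇑(σ^(k+1)) = ⇑σ ∘ ⇑(σ^k) := funext fun u => BIB_pow_succ_apply σ k u
      rw [this]
      exact hσ.comp ih

-- ============ convexity of half planes ============
lemma BIB_conv_gt (c : ℝ) : Convex ℝ {p : ℝ×ℝ | c < p.2} := by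
  intro x hx y hy a b ha hb hab
  simp only [Set.mem_setOf_eq] at *
  have h2 : (a • x + b • y).2 = a * x.2 + b * y.2 := by
    simp [Prod.smul_snd]
  rw [h2]
  have e1 : a * min x.2 y.2 ≤ a * x.2 := mul_le_mul_of_nonneg_left (min_le_left _ _) ha
  have e2 : b * min x.2 y.2 ≤ b * y.2 := mul_le_mul_of_nonneg_left (min_le_right _ _) hb
  have e3 : c < min x.2 y.2 := lt_min hx hy
  have e4 : (a+b) * min x.2 y.2 = min x.2 y.2 := by rw [hab, one_mul]
  nlinarith [e1, e2, e3, e4]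

-- ============ dichotomy ============
lemma BIB_dichotomy (E P : Set (ℝ×ℝ)) (hE : IsClosed E) (hP : IsPreconnected P)
    (hPf : ∀ z ∈ P, z ∉ frontier E) : P ⊆ interior E ∨ P ∩ E = ∅ := by
  by_cases hne : (P ∩ interior E).Nonempty
  · left
    apply hP.subset_left_of_subset_union isOpen_interior (isClosed_closure (s := E)).isOpen_compl
      ?_ ?_ hne
    · exact Set.disjoint_left.mpr fun z hz hz' => hz' (subset_closure (interior_subset hz))
    · intro z hz
      by_cases hzc : z ∈ closure E
      · left
        rw [closure_eq_interior_union_frontier] at hzc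
        rcases hzc with h | h
        · exact h
        · exact absurd h (hPf z hz)
      · right
        exact hzc
  · right
    rw [Set.not_nonempty_iff_eq_empty] at hne
    ext z
    simp only [Set.mem_inter_iff, Set.mem_empty_iff_false, iff_false, not_and]
    intro hzP hzE
    have hzc : z ∈ closure E := subset_closure hzE
    rw [closure_eq_interior_union_frontier] at hzc
    rcases hzc with h | h
    · exact (Set.eq_empty_iff_forall_notMem.mp hne z) ⟨hzP, h⟩
    · exact hPf z hzP h

-- frontier of image under homeomorph
lemma BIB_frontier_image (F : Homeomorph (ℝ×ℝ) (ℝ×ℝ)) (s : Set (ℝ×ℝ)) :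
    frontier (⇑F '' s) = ⇑F '' frontier s := by
  have h1 : ⇑F '' frontier s = ⇑F '' (closure s \ interior s) := rfl
  rw [h1, Set.image_diff F.injective, F.image_closure, F.image_interior]
  rfl

-- frontier of the lower half-plane is the line
lemma BIB_frontier_lower (c : ℝ) :
    frontier {p : ℝ×ℝ | p.2 ≤ c} = {p : ℝ×ℝ | p.2 = c} := by
  have h1 : closure {p : ℝ×ℝ | p.2 ≤ c} = {p : ℝ×ℝ | p.2 ≤ c} :=
    (isClosed_le continuous_snd continuous_const).closure_eq
  have h2 : interior {p : ℝ×ℝ | p.2 ≤ c} = {p : ℝ×ℝ | p.2 < c} := by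
    apply subset_antisymm
    · intro z hz
      rw [mem_interior_iff_mem_nhds, Metric.mem_nhds_iff] at hz
      obtain ⟨ε, hε, hball⟩ := hz
      have hmem : (z.1, z.2 + ε/2) ∈ Metric.ball z ε := by
        rw [Metric.mem_ball, Prod.dist_eq, Real.dist_eq, Real.dist_eq]
        simp only [sub_self, abs_zero, add_sub_cancel_left]
        rw [abs_of_pos (by linarith)]
        apply max_lt (by linarith) (by linarith)
      have := hball hmem
      simp only [Set.mem_setOf_eq] at this ⊢
      linarith
    · apply interior_maximal
      · intro z hz
        simp only [Set.mem_setOf_eq] at hz ⊢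
        linarith
      · exact isOpen_lt continuous_snd continuous_const
  rw [frontier, h1, h2]
  ext z
  simp only [Set.mem_diff, Set.mem_setOf_eq]
  constructor
  · rintro ⟨hle, hnlt⟩
    linarith [not_lt.mp hnlt]
  · intro h
    exact ⟨le_of_eq h, by simp [h]⟩

-- half-plane invariance given the line drops and the "bad case" is excluded
lemma BIB_halfplane (F : Homeomorph (ℝ×ℝ) (ℝ×ℝ)) (c : ℝ)
    (hline : ∀ p : ℝ×ℝ, p.2 = c → (F p).2 < c)
    (hgood : ¬ ({p : ℝ×ℝ | c < p.2} ⊆ interior (⇑F '' {p : ℝ×ℝ | p.2 ≤ c}))) :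
    ∀ p : ℝ×ℝ, p.2 ≤ c → (F p).2 < c := by
  set E : Set (ℝ×ℝ) := ⇑F '' {p : ℝ×ℝ | p.2 ≤ c} with hEdef
  have hEclosed : IsClosed E := (F.isClosedMap _ (isClosed_le continuous_snd continuous_const))
  have hfr : frontier E ⊆ {p : ℝ×ℝ | p.2 < c} := by
    rw [hEdef, BIB_frontier_image, BIB_frontier_lower]
    rintro w ⟨p, hp, rfl⟩
    exact hline p hp
  have hdich := BIB_dichotomy E {p : ℝ×ℝ | c < p.2} hEclosed (BIB_conv_gt c).isPreconnected
    (fun z hz hzf => by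
      have := hfr hzf
      simp only [Set.mem_setOf_eq] at hz this
      linarith)
  rcases hdich with hcase | hcase
  · exact absurd hcase hgood
  · -- E ⊆ {p.2 ≤ c}, then strict
    have hEsub : E ⊆ {p : ℝ×ℝ | p.2 ≤ c} := by
      intro w hw
      by_contra hcon
      simp only [Set.mem_setOf_eq, not_le] at hcon
      have hmem2 : w ∈ {p : ℝ×ℝ | c < p.2} ∩ E := ⟨hcon, hw⟩
      rw [hcase] at hmem2
      exact hmem2
    intro p hp
    have hmem : F p ∈ E := ⟨p, hp, rfl⟩
    have hle : (F p).2 ≤ c := hEsub hmem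
    rcases lt_or_eq_of_le hle with h | h
    · exact h
    · exfalso
      have hnotin : F p ∉ frontier E := by
        intro hfp
        have := hfr hfp
        simp only [Set.mem_setOf_eq] at this
        linarith
      have hclo : F p ∈ closure E := subset_closure hmem
      rw [closure_eq_interior_union_frontier] at hclo
      have hint : F p ∈ interior E := by
        rcases hclo with h' | h'
        · exact h'
        · exact absurd h' hnotin
      rw [mem_interior_iff_mem_nhds, Metric.mem_nhds_iff] at hint
      obtain ⟨ε, hε, hball⟩ := hint
      have hmem2 : ((F p).1, (F p).2 + ε/2) ∈ Metric.ball (F p) ε := by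
        rw [Metric.mem_ball, Prod.dist_eq, Real.dist_eq, Real.dist_eq]
        simp only [sub_self, abs_zero, add_sub_cancel_left]
        rw [abs_of_pos (by linarith)]
        apply max_lt (by linarith) (by linarith)
      have := hEsub (hball hmem2)
      simp only [Set.mem_setOf_eq] at this
      linarith
open Set Metric

def BIBGood (U : Set (ℝ×ℝ)) (q z : ℝ×ℝ) : Prop :=
  ∃ (m : ℕ) (v : ℕ → ℝ×ℝ), v 0 = q ∧ v m = z ∧
    (∀ i < m, segment ℝ (v i) (v (i+1)) ⊆ U) ∧ (∀ i < m, (v i).2 ≠ (v (i+1)).2)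

lemma BIB_good_append {U : Set (ℝ×ℝ)} {q z w : ℝ×ℝ} (h : BIBGood U q z)
    (hseg : segment ℝ z w ⊆ U) (hne : z.2 ≠ w.2) : BIBGood U q w := by
  obtain ⟨m, v, h0, hm, hsub, hnh⟩ := h
  refine ⟨m+1, fun i => if i ≤ m then v i else w, ?_, ?_, ?_, ?_⟩
  · dsimp only
    rw [if_pos (Nat.zero_le m)]
    exact h0
  · dsimp only
    rw [if_neg (by omega)]
  · intro i hi
    dsimp only
    rcases Nat.lt_or_ge i m with h1 | h1
    · rw [if_pos (by omega), if_pos (by omega)]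
      exact hsub i h1
    · have hieq : i = m := by omega
      subst hieq
      rw [if_pos (le_refl _), if_neg (by omega), hm]
      exact hseg
  · intro i hi
    dsimp only
    rcases Nat.lt_or_ge i m with h1 | h1
    · rw [if_pos (by omega), if_pos (by omega)]
      exact hnh i h1
    · have hieq : i = m := by omega
      subst hieq
      rw [if_pos (le_refl _), if_neg (by omega), hm]
      exact hne

lemma BIB_good_ballstep {U : Set (ℝ×ℝ)} {q z w : ℝ×ℝ} {ε : ℝ} (hε : 0 < ε)
    (hball : Metric.ball z ε ⊆ U) (hw : w ∈ Metric.ball z ε) (h : BIBGood U q z) :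
    BIBGood U q w := by
  have hzball : z ∈ Metric.ball z ε := Metric.mem_ball_self hε
  by_cases hne : z.2 = w.2
  · -- go through an intermediate point
    set mid : ℝ×ℝ := ((z.1 + w.1)/2, z.2 + ε/2) with hmid
    have hmidball : mid ∈ Metric.ball z ε := by
      rw [Metric.mem_ball, Prod.dist_eq, Real.dist_eq, Real.dist_eq]
      simp only [hmid]
      have hw1 : |w.1 - z.1| < ε := by
        have := (le_max_left (dist w.1 z.1) (dist w.2 z.2)).trans_lt
          (by rwa [Metric.mem_ball, Prod.dist_eq] at hw)
        rwa [Real.dist_eq] at this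
      rw [abs_sub_lt_iff] at hw1
      apply max_lt
      · rw [abs_sub_lt_iff]
        constructor <;> linarith [hw1.1, hw1.2, hε]
      · simp only [add_sub_cancel_left]
        rw [abs_of_pos (by linarith)]
        linarith
    have h1 : BIBGood U q mid := by
      apply BIB_good_append h ((convex_ball z ε).segment_subset hzball hmidball |>.trans hball)
      simp only [hmid]
      intro hcon
      have : z.2 = z.2 + ε/2 := hcon
      linarith
    apply BIB_good_append h1 ((convex_ball z ε).segment_subset hmidball hw |>.trans hball)
    simp only [hmid, ← hne]
    intro hcon
    have : z.2 + ε/2 = z.2 := hcon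
    linarith
  · exact BIB_good_append h ((convex_ball z ε).segment_subset hzball hw |>.trans hball) hne

lemma BIB_good_ballstep' {U : Set (ℝ×ℝ)} {q z w : ℝ×ℝ} {ε : ℝ} (hε : 0 < ε)
    (hball : Metric.ball z ε ⊆ U) (hw : w ∈ Metric.ball z ε) (h : BIBGood U q w) :
    BIBGood U q z := by
  have hzball : z ∈ Metric.ball z ε := Metric.mem_ball_self hε
  by_cases hne : w.2 = z.2
  · set mid : ℝ×ℝ := ((z.1 + w.1)/2, z.2 + ε/2) with hmid
    have hmidball : mid ∈ Metric.ball z ε := by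
      rw [Metric.mem_ball, Prod.dist_eq, Real.dist_eq, Real.dist_eq]
      simp only [hmid]
      have hw1 : |w.1 - z.1| < ε := by
        have := (le_max_left (dist w.1 z.1) (dist w.2 z.2)).trans_lt
          (by rwa [Metric.mem_ball, Prod.dist_eq] at hw)
        rwa [Real.dist_eq] at this
      rw [abs_sub_lt_iff] at hw1
      apply max_lt
      · rw [abs_sub_lt_iff]
        constructor <;> linarith [hw1.1, hw1.2, hε]
      · simp only [add_sub_cancel_left]
        rw [abs_of_pos (by linarith)]
        linarith
    have h1 : BIBGood U q mid := by
      apply BIB_good_append h ((convex_ball z ε).segment_subset hw hmidball |>.trans hball)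
      simp only [hmid, hne]
      intro hcon
      have : z.2 = z.2 + ε/2 := hcon
      linarith
    apply BIB_good_append h1 ((convex_ball z ε).segment_subset hmidball hzball |>.trans hball)
    simp only [hmid]
    intro hcon
    have : z.2 + ε/2 = z.2 := hcon
    linarith
  · exact BIB_good_append h ((convex_ball z ε).segment_subset hw hzball |>.trans hball) hne

lemma BIB_polyconn (U : Set (ℝ×ℝ)) (hU : IsOpen U) (hUc : IsPreconnected U)
    (q w1 : ℝ×ℝ) (hq : q ∈ U) (hw1 : w1 ∈ U) : BIBGood U q w1 := by
  classical
  have hrad : ∀ z : ℝ×ℝ, z ∈ U → ∃ ε : ℝ, 0 < ε ∧ Metric.ball z ε ⊆ U := by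
    intro z hz
    rw [Metric.isOpen_iff] at hU
    obtain ⟨ε, hε, hball⟩ := hU z hz
    exact ⟨ε, hε, hball⟩
  choose rad hradpos hradball using hrad
  set u1 : Set (ℝ×ℝ) := ⋃ (z : ℝ×ℝ), ⋃ (hz : z ∈ U), ⋃ (_ : BIBGood U q z),
    Metric.ball z (rad z hz) with hu1
  set u2 : Set (ℝ×ℝ) := ⋃ (z : ℝ×ℝ), ⋃ (hz : z ∈ U), ⋃ (_ : ¬ BIBGood U q z),
    Metric.ball z (rad z hz) with hu2
  have ho1 : IsOpen u1 :=
    isOpen_iUnion fun z => isOpen_iUnion fun hz => isOpen_iUnion fun _ => Metric.isOpen_ball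
  have ho2 : IsOpen u2 :=
    isOpen_iUnion fun z => isOpen_iUnion fun hz => isOpen_iUnion fun _ => Metric.isOpen_ball
  have hdisj : Disjoint u1 u2 := by
    rw [Set.disjoint_left]
    intro p hp1 hp2
    simp only [hu1, Set.mem_iUnion] at hp1
    simp only [hu2, Set.mem_iUnion] at hp2
    obtain ⟨z1, hz1, hg1, hb1⟩ := hp1
    obtain ⟨z2, hz2, hg2, hb2⟩ := hp2
    have hgp : BIBGood U q p := BIB_good_ballstep (hradpos z1 hz1) (hradball z1 hz1) hb1 hg1
    exact hg2 (BIB_good_ballstep' (hradpos z2 hz2) (hradball z2 hz2) hb2 hgp)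
  have hcover : U ⊆ u1 ∪ u2 := by
    intro z hz
    by_cases hg : BIBGood U q z
    · left
      simp only [hu1, Set.mem_iUnion]
      exact ⟨z, hz, hg, Metric.mem_ball_self (hradpos z hz)⟩
    · right
      simp only [hu2, Set.mem_iUnion]
      exact ⟨z, hz, hg, Metric.mem_ball_self (hradpos z hz)⟩
  have hne1 : (U ∩ u1).Nonempty := by
    refine ⟨q, hq, ?_⟩
    simp only [hu1, Set.mem_iUnion]
    exact ⟨q, hq, ⟨0, fun _ => q, rfl, rfl, by omega, by omega⟩,
      Metric.mem_ball_self (hradpos q hq)⟩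
  have hsub := hUc.subset_left_of_subset_union ho1 ho2 hdisj hcover hne1
  have hw1u := hsub hw1
  simp only [hu1, Set.mem_iUnion] at hw1u
  obtain ⟨z1, hz1, hg1, hb1⟩ := hw1u
  exact BIB_good_ballstep (hradpos z1 hz1) (hradball z1 hz1) hb1 hg1

-- shifting segments horizontally
lemma BIB_seg_shift (p r : ℝ×ℝ) (j : ℝ) (z : ℝ×ℝ)
    (hz : z ∈ segment ℝ (p.1 + j, p.2) (r.1 + j, r.2)) : (z.1 - j, z.2) ∈ segment ℝ p r := by
  rw [segment_eq_image'] at hz ⊢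
  obtain ⟨θ, hθ, heq⟩ := hz
  refine ⟨θ, hθ, ?_⟩
  have h1 : (p.1 + j) + θ * ((r.1 + j) - (p.1 + j)) = z.1 := by
    have := congrArg Prod.fst heq
    simpa using this
  have h2 : p.2 + θ * (r.2 - p.2) = z.2 := by
    have := congrArg Prod.snd heq
    simpa using this
  have hpair : p + θ • (r - p) = (p.1 + θ * (r.1 - p.1), p.2 + θ * (r.2 - p.2)) := by
    ext <;> simp [Prod.smul_fst, Prod.smul_snd]
  dsimp only
  rw [hpair, Prod.mk.injEq]
  constructor
  · linarith
  · linarith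
open Set Metric Finset

lemma BIB_ind_sub_ne {P Q : Prop} [Decidable P] [Decidable Q] :
    ((if P then (1:ℤ) else 0) - (if Q then (1:ℤ) else 0)) ≠ 0 ↔ (P ∧ ¬ Q) ∨ (¬ P ∧ Q) := by
  by_cases hP : P <;> by_cases hQ : Q <;> simp [hP, hQ]

lemma BIB_seg_compact (x y : ℝ × ℝ) : IsCompact (segment ℝ x y) := by
  rw [segment_eq_image']
  exact isCompact_Icc.image (by fun_prop)

set_option maxHeartbeats 2000000 in
lemma BIB_wall_sep (m : ℕ) (hm : 1 ≤ m) (v : ℕ → ℝ × ℝ)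
    (hnh : ∀ i < m, (v i).2 ≠ (v (i+1)).2)
    (c1 c0 : ℝ)
    (hlow : (v 0).2 < c1) (hhigh : c0 < (v m).2)
    (S : Set (ℝ × ℝ)) (hS : IsPreconnected S)
    (hSband : ∀ z ∈ S, c1 ≤ z.2 ∧ z.2 ≤ c0)
    (hdisj : ∀ i < m, ∀ z ∈ S, z ∉ segment ℝ (v i) (v (i+1)))
    (a b : ℝ × ℝ) (ha : a ∈ S) (hb : b ∈ S)
    (haL : ∀ i ≤ m, a.1 < (v i).1) (hbR : ∀ i ≤ m, (v i).1 < b.1) : False := by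
  classical
  -- the wall
  set G : Set (ℝ × ℝ) := ⋃ (i : ℕ), ⋃ (_ : i < m), segment ℝ (v i) (v (i+1)) with hG
  have hGmem : ∀ w : ℝ × ℝ, w ∈ G ↔ ∃ i, i < m ∧ w ∈ segment ℝ (v i) (v (i+1)) := by
    intro w
    rw [hG, Set.mem_iUnion₂]
    tauto
  have hGclosed : IsClosed G := by
    have hGeq : G = ⋃ i ∈ Finset.range m, segment ℝ (v i) (v (i+1)) := by
      ext w
      rw [hGmem, Set.mem_iUnion₂]
      simp
    rw [hGeq]
    apply Set.Finite.isClosed_biUnion (Finset.range m).finite_toSet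
    intro i _
    exact (BIB_seg_compact _ _).isClosed
  have hGne : G.Nonempty :=
    ⟨v 0, (hGmem _).mpr ⟨0, hm, left_mem_segment ℝ _ _⟩⟩
  have hvG : ∀ i ≤ m, v i ∈ G := by
    intro i hi
    rcases Nat.lt_or_ge i m with h | h
    · exact (hGmem _).mpr ⟨i, h, left_mem_segment ℝ _ _⟩
    · have him : i = m := le_antisymm hi h
      rw [him]
      refine (hGmem _).mpr ⟨m - 1, by omega, ?_⟩
      have h2 : v (m - 1 + 1) ∈ segment ℝ (v (m-1)) (v (m-1+1)) := right_mem_segment ℝ _ _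
      simpa [Nat.sub_add_cancel hm] using h2
  -- interpolation
  set X : ℕ → ℝ → ℝ := fun i t =>
    (v i).1 + (t - (v i).2) / ((v (i+1)).2 - (v i).2) * ((v (i+1)).1 - (v i).1) with hX
  set A : ℕ → ℝ → ℤ := fun i t =>
    (if (v i).2 ≤ t then (1:ℤ) else 0) - (if (v (i+1)).2 ≤ t then (1:ℤ) else 0) with hA
  set W : ℝ × ℝ → ℤ := fun z =>
    ∑ i ∈ Finset.range m, A i z.2 * (if X i z.2 < z.1 then (1:ℤ) else 0) with hW
  -- interpolation at endpoints
  have hX0 : ∀ i, X i ((v i).2) = (v i).1 := by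
    intro i; simp only [hX]; simp
  have hX1 : ∀ i < m, X i ((v (i+1)).2) = (v (i+1)).1 := by
    intro i hi
    have hne : (v (i+1)).2 - (v i).2 ≠ 0 := sub_ne_zero.mpr (hnh i hi).symm
    simp only [hX]
    field_simp
    ring
  have hXcont : ∀ i, Continuous (X i) := by
    intro i; simp only [hX]; fun_prop
  -- active characterization
  have hAiff : ∀ i < m, ∀ t : ℝ, A i t ≠ 0 ↔
      (min (v i).2 (v (i+1)).2 ≤ t ∧ t < max (v i).2 (v (i+1)).2) := by
    intro i hi t
    simp only [hA]
    rw [BIB_ind_sub_ne]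
    rcases lt_or_gt_of_ne (hnh i hi) with h | h
    · constructor
      · rintro (⟨h1, h2⟩ | ⟨h1, h2⟩)
        · exact ⟨by rw [min_eq_left h.le]; exact h1, by rw [max_eq_right h.le]; exact lt_of_not_ge h2⟩
        · exact absurd (le_trans h.le h2) h1
      · rintro ⟨h1, h2⟩
        left
        rw [min_eq_left h.le] at h1
        rw [max_eq_right h.le] at h2
        exact ⟨h1, not_le_of_gt h2⟩
    · constructor
      · rintro (⟨h1, h2⟩ | ⟨h1, h2⟩)
        · exact absurd (le_trans h.le h1) h2
        · exact ⟨by rw [min_eq_right h.le]; exact h2, by rw [max_eq_left h.le]; exact lt_of_not_ge h1⟩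
      · rintro ⟨h1, h2⟩
        right
        rw [min_eq_right h.le] at h1
        rw [max_eq_left h.le] at h2
        exact ⟨not_le_of_gt h2, h1⟩
  -- membership of crossing points
  have hmemseg : ∀ i < m, ∀ t : ℝ, A i t ≠ 0 → (X i t, t) ∈ segment ℝ (v i) (v (i+1)) := by
    intro i hi t hAt
    rw [hAiff i hi t] at hAt
    have hne := hnh i hi
    have hne' : (v (i+1)).2 - (v i).2 ≠ 0 := sub_ne_zero.mpr hne.symm
    set lam : ℝ := (t - (v i).2) / ((v (i+1)).2 - (v i).2) with hlam
    have hlam01 : 0 ≤ lam ∧ lam ≤ 1 := by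
      rcases lt_or_gt_of_ne hne with h | h
      · rw [min_eq_left h.le, max_eq_right h.le] at hAt
        constructor
        · apply div_nonneg (by linarith [hAt.1]) (by linarith)
        · rw [hlam, div_le_one (by linarith)]; linarith [hAt.2]
      · rw [min_eq_right h.le, max_eq_left h.le] at hAt
        have hd : (v (i+1)).2 - (v i).2 < 0 := by linarith
        constructor
        · rw [hlam, div_nonneg_iff]; right; exact ⟨by linarith [hAt.2], hd.le⟩
        · rw [hlam, div_le_one_iff]
          right; right; exact ⟨hd, by linarith [hAt.1]⟩
    have hsnd : ((v i) + lam • ((v (i+1)) - (v i))).2 = t := by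
      simp only [Prod.snd_add, Prod.snd_sub, Prod.smul_snd, smul_eq_mul]
      rw [hlam]
      field_simp
      ring
    have hfst : ((v i) + lam • ((v (i+1)) - (v i))).1 = X i t := by
      simp only [Prod.fst_add, Prod.fst_sub, Prod.smul_fst, smul_eq_mul]
      rfl
    rw [segment_eq_image']
    exact (Set.mem_image _ _ _).mpr ⟨lam, Set.mem_Icc.mpr hlam01, Prod.ext hfst hsnd⟩
  -- crossing points lie between the endpoints' abscissas
  have hXbetween : ∀ i < m, ∀ t : ℝ, A i t ≠ 0 → ∀ r : ℝ,
      (r < (v i).1 → r < (v (i+1)).1 → r < X i t) ∧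
      ((v i).1 < r → (v (i+1)).1 < r → X i t < r) := by
    intro i hi t hAt r
    have hmem := hmemseg i hi t hAt
    rw [segment_eq_image', Set.mem_image] at hmem
    obtain ⟨lam, hlamm, heq⟩ := hmem
    rw [Set.mem_Icc] at hlamm
    have h1 : (v i).1 + lam * ((v (i+1)).1 - (v i).1) = X i t := by
      have := congrArg Prod.fst heq
      simpa using this
    constructor
    · intro hr1 hr2
      have e1 : (1-lam) * (min ((v i).1 - r) ((v (i+1)).1 - r)) ≤ (1-lam)*((v i).1 - r) :=
        mul_le_mul_of_nonneg_left (min_le_left _ _) (by linarith [hlamm.2])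
      have e2 : lam * (min ((v i).1 - r) ((v (i+1)).1 - r)) ≤ lam*((v (i+1)).1 - r) :=
        mul_le_mul_of_nonneg_left (min_le_right _ _) hlamm.1
      have hd : 0 < min ((v i).1 - r) ((v (i+1)).1 - r) := lt_min (by linarith) (by linarith)
      nlinarith [e1, e2, hd, h1]
    · intro hr1 hr2
      have e1 : (1-lam)*((v i).1 - r) ≤ (1-lam) * (max ((v i).1 - r) ((v (i+1)).1 - r)) :=
        mul_le_mul_of_nonneg_left (le_max_left _ _) (by linarith [hlamm.2])
      have e2 : lam*((v (i+1)).1 - r) ≤ lam * (max ((v i).1 - r) ((v (i+1)).1 - r)) :=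
        mul_le_mul_of_nonneg_left (le_max_right _ _) hlamm.1
      have hd : max ((v i).1 - r) ((v (i+1)).1 - r) < 0 := max_lt (by linarith) (by linarith)
      nlinarith [e1, e2, hd, h1]
  -- the two extreme values
  have hWa : W a = 0 := by
    show (∑ i ∈ Finset.range m, A i a.2 * (if X i a.2 < a.1 then (1:ℤ) else 0)) = 0
    apply Finset.sum_eq_zero
    intro i hi
    rw [Finset.mem_range] at hi
    by_cases hAt : A i a.2 = 0
    · rw [hAt]; ring
    · have h2 := (hXbetween i hi a.2 hAt a.1).1 (haL i hi.le) (haL (i+1) hi)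
      rw [if_neg (not_lt_of_gt h2)]
      ring
  have hWb : W b = 1 := by
    show (∑ i ∈ Finset.range m, A i b.2 * (if X i b.2 < b.1 then (1:ℤ) else 0)) = 1
    have hcongr : ∀ i ∈ Finset.range m,
        A i b.2 * (if X i b.2 < b.1 then (1:ℤ) else 0) = A i b.2 := by
      intro i hi
      rw [Finset.mem_range] at hi
      by_cases hAt : A i b.2 = 0
      · rw [hAt]; ring
      · have h2 := (hXbetween i hi b.2 hAt b.1).2 (hbR i hi.le) (hbR (i+1) hi)
        rw [if_pos h2, mul_one]
    rw [Finset.sum_congr rfl hcongr]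
    simp only [hA]
    rw [Finset.sum_range_sub' (fun k => if (v k).2 ≤ b.2 then (1:ℤ) else 0) m]
    have hb2 := hSband b hb
    rw [if_pos (by linarith [hb2.1] : (v 0).2 ≤ b.2),
        if_neg (by push_neg; linarith [hb2.2] : ¬ (v m).2 ≤ b.2)]
    norm_num
  -- ======================= local constancy =======================
  have hloc : ∀ z : ℝ × ℝ, c1 ≤ z.2 → z.2 ≤ c0 → z ∉ G →
      ∃ r : ℝ, 0 < r ∧ ∀ z' : ℝ × ℝ, dist z' z < r → W z' = W z := by
    intro z hz1 hz2 hzG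
    have hr0 : 0 < infDist z G := (hGclosed.notMem_iff_infDist_pos hGne).mp hzG
    set r0 : ℝ := infDist z G with hr0def
    set r : ℝ := min (r0/2) (min ((c1 - (v 0).2)/2) (((v m).2 - c0)/2)) with hrdef
    have hr : 0 < r := by
      apply lt_min (by linarith)
      exact lt_min (by linarith) (by linarith)
    have hrr0 : 2*r ≤ r0 := by
      have := min_le_left (r0/2) (min ((c1 - (v 0).2)/2) (((v m).2 - c0)/2))
      rw [← hrdef] at this
      linarith
    have hry0 : (v 0).2 ≤ c1 - 2*r := by
      have h1 := min_le_right (r0/2) (min ((c1 - (v 0).2)/2) (((v m).2 - c0)/2))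
      have h2 := min_le_left ((c1 - (v 0).2)/2) (((v m).2 - c0)/2)
      rw [← hrdef] at h1
      linarith [le_trans h1 h2]
    have hrym : c0 + 2*r ≤ (v m).2 := by
      have h1 := min_le_right (r0/2) (min ((c1 - (v 0).2)/2) (((v m).2 - c0)/2))
      have h2 := min_le_right ((c1 - (v 0).2)/2) (((v m).2 - c0)/2)
      rw [← hrdef] at h1
      linarith [le_trans h1 h2]
    refine ⟨r, hr, ?_⟩
    intro z' hdz'
    rw [Prod.dist_eq] at hdz'
    have hd1 : |z'.1 - z.1| < r := by
      have := (le_max_left (dist z'.1 z.1) (dist z'.2 z.2)).trans_lt hdz'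
      rwa [Real.dist_eq] at this
    have hd2 : |z'.2 - z.2| < r := by
      have := (le_max_right (dist z'.1 z.1) (dist z'.2 z.2)).trans_lt hdz'
      rwa [Real.dist_eq] at this
    -- crossing points within the level window are far from z horizontally
    have hwin : ∀ s : ℝ, |s - z.2| < r → ∀ i, i < m → A i s ≠ 0 → 2*r ≤ |X i s - z.1| := by
      intro s hs i hi hAs
      have hmem : (X i s, s) ∈ G := (hGmem _).mpr ⟨i, hi, hmemseg i hi s hAs⟩
      have h1 : r0 ≤ dist z (X i s, s) := infDist_le_dist_of_mem hmem
      rw [Prod.dist_eq, Real.dist_eq, Real.dist_eq] at h1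
      have h2 : |z.2 - s| < r := by rwa [abs_sub_comm]
      rcases le_total (|z.1 - X i s|) (|z.2 - s|) with h | h
      · exfalso
        have : r0 ≤ |z.2 - s| := h1.trans (max_le h (le_refl _))
        linarith
      · have h3 : r0 ≤ |z.1 - X i s| := h1.trans (max_le (le_refl _) h)
        rw [abs_sub_comm]
        linarith
    -- vertices within the level window are far from z horizontally
    have hvert2r : ∀ k ≤ m, |(v k).2 - z.2| < r → 2*r ≤ |(v k).1 - z.1| := by
      intro k hk hkr
      have h1 : r0 ≤ dist z (v k) := infDist_le_dist_of_mem (hvG k hk)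
      rw [Prod.dist_eq, Real.dist_eq, Real.dist_eq] at h1
      have h2 : |z.2 - (v k).2| < r := by rwa [abs_sub_comm]
      rcases le_total (|z.1 - (v k).1|) (|z.2 - (v k).2|) with h | h
      · exfalso
        have : r0 ≤ |z.2 - (v k).2| := h1.trans (max_le h (le_refl _))
        linarith
      · have h3 : r0 ≤ |z.1 - (v k).1| := h1.trans (max_le (le_refl _) h)
        rw [abs_sub_comm]
        linarith
    -- constant sign of crossing positions within the window
    have hsign : ∀ i, i < m → ∀ s s' : ℝ, |s - z.2| < r → |s' - z.2| < r →
        A i s ≠ 0 → A i s' ≠ 0 → ((X i s < z.1) ↔ (X i s' < z.1)) := by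
      intro i hi s s' hs hs' hAs hAs'
      by_cases hP : X i s < z.1 <;> by_cases hQ : X i s' < z.1
      · exact iff_of_true hP hQ
      · exfalso
        have hz1mem : z.1 ∈ Set.uIcc (X i s) (X i s') := by
          rw [Set.mem_uIcc]
          left
          exact ⟨hP.le, not_lt.mp hQ⟩
        obtain ⟨sx, hsxmem, hsxeq⟩ := intermediate_value_uIcc ((hXcont i).continuousOn) hz1mem
        have hsxwin : |sx - z.2| < r := by
          rw [Set.mem_uIcc] at hsxmem
          rw [abs_sub_lt_iff] at hs hs' ⊢
          rcases hsxmem with ⟨u1, u2⟩ | ⟨u1, u2⟩ <;> constructor <;> linarith [hs.1, hs.2, hs'.1, hs'.2]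
        have hsxact : A i sx ≠ 0 := by
          rw [hAiff i hi] at hAs hAs' ⊢
          rw [Set.mem_uIcc] at hsxmem
          rcases hsxmem with ⟨u1, u2⟩ | ⟨u1, u2⟩
          · exact ⟨le_trans hAs.1 u1, lt_of_le_of_lt u2 hAs'.2⟩
          · exact ⟨le_trans hAs'.1 u1, lt_of_le_of_lt u2 hAs.2⟩
        have := hwin sx hsxwin i hi hsxact
        rw [hsxeq] at this
        simp at this
        linarith
      · exfalso
        have hz1mem : z.1 ∈ Set.uIcc (X i s) (X i s') := by
          rw [Set.mem_uIcc]
          right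
          exact ⟨hQ.le, not_lt.mp hP⟩
        obtain ⟨sx, hsxmem, hsxeq⟩ := intermediate_value_uIcc ((hXcont i).continuousOn) hz1mem
        have hsxwin : |sx - z.2| < r := by
          rw [Set.mem_uIcc] at hsxmem
          rw [abs_sub_lt_iff] at hs hs' ⊢
          rcases hsxmem with ⟨u1, u2⟩ | ⟨u1, u2⟩ <;> constructor <;> linarith [hs.1, hs.2, hs'.1, hs'.2]
        have hsxact : A i sx ≠ 0 := by
          rw [hAiff i hi] at hAs hAs' ⊢
          rw [Set.mem_uIcc] at hsxmem
          rcases hsxmem with ⟨u1, u2⟩ | ⟨u1, u2⟩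
          · exact ⟨le_trans hAs.1 u1, lt_of_le_of_lt u2 hAs'.2⟩
          · exact ⟨le_trans hAs'.1 u1, lt_of_le_of_lt u2 hAs.2⟩
        have := hwin sx hsxwin i hi hsxact
        rw [hsxeq] at this
        simp at this
        linarith
      · exact iff_of_false hP hQ
    -- generalized no-sign-flip towards a target level
    have hnoflip : ∀ i, i < m → ∀ s t2 : ℝ, |s - z.2| < r → |t2 - z.2| < r →
        A i s ≠ 0 → 2*r ≤ |X i t2 - z.1| →
        (∀ sx : ℝ, sx ∈ Set.uIcc s t2 → sx ≠ t2 → A i sx ≠ 0) →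
        ((X i s < z.1) ↔ (X i t2 < z.1)) := by
      intro i hi s t2 hsw ht2w hAs h2r hactx
      by_cases hP : X i s < z.1 <;> by_cases hQ : X i t2 < z.1
      · exact iff_of_true hP hQ
      · exfalso
        have hz1mem : z.1 ∈ Set.uIcc (X i s) (X i t2) :=
          Set.mem_uIcc.mpr (Or.inl ⟨hP.le, not_lt.mp hQ⟩)
        obtain ⟨sx, hsxmem, hsxeq⟩ := intermediate_value_uIcc ((hXcont i).continuousOn) hz1mem
        have hne2 : sx ≠ t2 := by
          intro heq
          rw [heq] at hsxeq
          rw [hsxeq] at h2r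
          simp at h2r
          linarith
        have hsxact := hactx sx hsxmem hne2
        have hsxwin : |sx - z.2| < r := by
          rw [Set.mem_uIcc] at hsxmem
          rw [abs_sub_lt_iff] at hsw ht2w ⊢
          rcases hsxmem with ⟨u1, u2⟩ | ⟨u1, u2⟩ <;> constructor <;> linarith
        have := hwin sx hsxwin i hi hsxact
        rw [hsxeq] at this
        simp at this
        linarith
      · exfalso
        have hz1mem : z.1 ∈ Set.uIcc (X i s) (X i t2) :=
          Set.mem_uIcc.mpr (Or.inr ⟨hQ.le, not_lt.mp hP⟩)
        obtain ⟨sx, hsxmem, hsxeq⟩ := intermediate_value_uIcc ((hXcont i).continuousOn) hz1mem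
        have hne2 : sx ≠ t2 := by
          intro heq
          rw [heq] at hsxeq
          rw [hsxeq] at h2r
          simp at h2r
          linarith
        have hsxact := hactx sx hsxmem hne2
        have hsxwin : |sx - z.2| < r := by
          rw [Set.mem_uIcc] at hsxmem
          rw [abs_sub_lt_iff] at hsw ht2w ⊢
          rcases hsxmem with ⟨u1, u2⟩ | ⟨u1, u2⟩ <;> constructor <;> linarith
        have := hwin sx hsxwin i hi hsxact
        rw [hsxeq] at this
        simp at this
        linarith
      · exact iff_of_false hP hQ
    -- canonical leftness of each segment within the window
    have hlaex : ∀ i : ℕ, ∃ l : ℤ, ∀ s : ℝ, i < m → |s - z.2| < r → A i s ≠ 0 →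
        l = (if X i s < z.1 then (1:ℤ) else 0) := by
      intro i
      by_cases hex : ∃ s : ℝ, (i < m ∧ |s - z.2| < r) ∧ A i s ≠ 0
      · obtain ⟨s0, ⟨hi0, hs0⟩, hA0⟩ := hex
        refine ⟨if X i s0 < z.1 then (1:ℤ) else 0, ?_⟩
        intro s hi hs hAs
        have hiff := hsign i hi s0 s hs0 hs hA0 hAs
        by_cases hc : X i s < z.1
        · rw [if_pos hc, if_pos (hiff.mpr hc)]
        · rw [if_neg hc, if_neg (fun hcc => hc (hiff.mp hcc))]
      · refine ⟨0, ?_⟩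
        intro s hi hs hAs
        exact absurd ⟨s, ⟨hi, hs⟩, hAs⟩ hex
    choose la hlaeq using hlaex
    -- the two sum representations
    have habs1 : z'.1 - z.1 < r ∧ z.1 - z'.1 < r := abs_sub_lt_iff.mp hd1
    have habs2 : z'.2 - z.2 < r ∧ z.2 - z'.2 < r := abs_sub_lt_iff.mp hd2
    have hshift : ∀ i, i < m → A i z'.2 ≠ 0 → ((X i z'.2 < z'.1) ↔ (X i z'.2 < z.1)) := by
      intro i hi hAs
      have h2r := hwin z'.2 hd2 i hi hAs
      rcases le_or_gt (X i z'.2) z.1 with h | h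
      · have hXle : X i z'.2 ≤ z.1 - 2*r := by
          rcases abs_cases (X i z'.2 - z.1) with ⟨he, _⟩ | ⟨he, _⟩ <;> linarith
        constructor
        · intro _; linarith
        · intro _; linarith [habs1.2]
      · have hXge : z.1 + 2*r ≤ X i z'.2 := by
          rcases abs_cases (X i z'.2 - z.1) with ⟨he, _⟩ | ⟨he, _⟩ <;> linarith
        constructor
        · intro hcc; linarith [habs1.1]
        · intro hcc; linarith
    have hWzval : W z = ∑ i ∈ Finset.range m, A i z.2 * la i := by
      show (∑ i ∈ Finset.range m, A i z.2 * (if X i z.2 < z.1 then (1:ℤ) else 0)) = _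
      apply Finset.sum_congr rfl
      intro i hi
      rw [Finset.mem_range] at hi
      by_cases hAs : A i z.2 = 0
      · rw [hAs]; ring
      · rw [← hlaeq i z.2 hi (by simpa using hr) hAs]
    have hWz'val : W z' = ∑ i ∈ Finset.range m, A i z'.2 * la i := by
      show (∑ i ∈ Finset.range m, A i z'.2 * (if X i z'.2 < z'.1 then (1:ℤ) else 0)) = _
      apply Finset.sum_congr rfl
      intro i hi
      rw [Finset.mem_range] at hi
      by_cases hAs : A i z'.2 = 0
      · rw [hAs]; ring
      · rw [hlaeq i z'.2 hi hd2 hAs]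
        have hiff := hshift i hi hAs
        by_cases hc : X i z'.2 < z'.1
        · rw [if_pos hc, if_pos (hiff.mp hc)]
        · rw [if_neg hc, if_neg (fun hcc => hc (hiff.mpr hcc))]
    -- vertex determination of leftness
    have hseg0 : ∀ i, i < m → |(v i).2 - z.2| < r →
        la i = (if (v i).1 < z.1 then (1:ℤ) else 0) := by
      intro i hi hwv
      rcases lt_or_gt_of_ne (hnh i hi) with hlt | hgt
      · have hAs : A i ((v i).2) ≠ 0 := by
          rw [hAiff i hi]
          exact ⟨min_le_left _ _, lt_of_lt_of_le hlt (le_max_right _ _)⟩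
        rw [hlaeq i ((v i).2) hi hwv hAs, hX0 i]
      · have hwv' := abs_sub_lt_iff.mp hwv
        have hdelpos : 0 < min ((r - |(v i).2 - z.2|)/2) (((v i).2 - (v (i+1)).2)/2) :=
          lt_min (by linarith [hwv]) (by linarith)
        set del : ℝ := min ((r - |(v i).2 - z.2|)/2) (((v i).2 - (v (i+1)).2)/2) with hdel
        have hdel1 : del ≤ (r - |(v i).2 - z.2|)/2 := min_le_left _ _
        have hdel2 : del ≤ ((v i).2 - (v (i+1)).2)/2 := min_le_right _ _
        set sp : ℝ := max ((v (i+1)).2) ((v i).2 - del) with hsdef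
        have hs1 : sp < (v i).2 := max_lt (by linarith) (by linarith)
        have hs2 : (v (i+1)).2 ≤ sp := le_max_left _ _
        have hs3 : (v i).2 - del ≤ sp := le_max_right _ _
        have heabs : (v i).2 - z.2 ≤ |(v i).2 - z.2| := le_abs_self _
        have heabs2 : z.2 - (v i).2 ≤ |(v i).2 - z.2| := by
          rw [abs_sub_comm]; exact le_abs_self _
        have hswin : |sp - z.2| < r := by
          rw [abs_sub_lt_iff]
          constructor <;> linarith
        have hAs : A i sp ≠ 0 := by
          rw [hAiff i hi]
          exact ⟨(min_le_right _ _).trans hs2, lt_of_lt_of_le hs1 (le_max_left _ _)⟩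
        have hactfun : ∀ sx : ℝ, sx ∈ Set.uIcc sp ((v i).2) → sx ≠ (v i).2 → A i sx ≠ 0 := by
          intro sx hsx hne2
          have hb2 : sp ≤ sx ∧ sx ≤ (v i).2 := by
            rw [Set.mem_uIcc] at hsx
            rcases hsx with ⟨u1, u2⟩ | ⟨u1, u2⟩
            · exact ⟨u1, u2⟩
            · constructor <;> linarith
          have hlt2 : sx < (v i).2 := lt_of_le_of_ne hb2.2 hne2
          rw [hAiff i hi]
          exact ⟨(min_le_right _ _).trans (hs2.trans hb2.1), lt_of_lt_of_le hlt2 (le_max_left _ _)⟩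
        have hiff2 := hnoflip i hi sp ((v i).2) hswin hwv hAs
          (by rw [hX0 i]; exact hvert2r i hi.le hwv) hactfun
        rw [hX0 i] at hiff2
        rw [hlaeq i sp hi hswin hAs]
        by_cases hc : X i sp < z.1
        · rw [if_pos hc, if_pos (hiff2.mp hc)]
        · rw [if_neg hc, if_neg (fun hcc => hc (hiff2.mpr hcc))]
    have hseg1 : ∀ i, i < m → |(v (i+1)).2 - z.2| < r →
        la i = (if (v (i+1)).1 < z.1 then (1:ℤ) else 0) := by
      intro i hi hwv
      rcases lt_or_gt_of_ne (hnh i hi) with hlt | hgt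
      · have hwv' := abs_sub_lt_iff.mp hwv
        have hdelpos : 0 < min ((r - |(v (i+1)).2 - z.2|)/2) (((v (i+1)).2 - (v i).2)/2) :=
          lt_min (by linarith [hwv]) (by linarith)
        set del : ℝ := min ((r - |(v (i+1)).2 - z.2|)/2) (((v (i+1)).2 - (v i).2)/2) with hdel
        have hdel1 : del ≤ (r - |(v (i+1)).2 - z.2|)/2 := min_le_left _ _
        have hdel2 : del ≤ ((v (i+1)).2 - (v i).2)/2 := min_le_right _ _
        set sp : ℝ := max ((v i).2) ((v (i+1)).2 - del) with hsdef
        have hs1 : sp < (v (i+1)).2 := max_lt (by linarith) (by linarith)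
        have hs2 : (v i).2 ≤ sp := le_max_left _ _
        have hs3 : (v (i+1)).2 - del ≤ sp := le_max_right _ _
        have heabs : (v (i+1)).2 - z.2 ≤ |(v (i+1)).2 - z.2| := le_abs_self _
        have heabs2 : z.2 - (v (i+1)).2 ≤ |(v (i+1)).2 - z.2| := by
          rw [abs_sub_comm]; exact le_abs_self _
        have hswin : |sp - z.2| < r := by
          rw [abs_sub_lt_iff]
          constructor <;> linarith
        have hAs : A i sp ≠ 0 := by
          rw [hAiff i hi]
          exact ⟨(min_le_left _ _).trans hs2, lt_of_lt_of_le hs1 (le_max_right _ _)⟩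
        have hactfun : ∀ sx : ℝ, sx ∈ Set.uIcc sp ((v (i+1)).2) → sx ≠ (v (i+1)).2 → A i sx ≠ 0 := by
          intro sx hsx hne2
          have hb2 : sp ≤ sx ∧ sx ≤ (v (i+1)).2 := by
            rw [Set.mem_uIcc] at hsx
            rcases hsx with ⟨u1, u2⟩ | ⟨u1, u2⟩
            · exact ⟨u1, u2⟩
            · constructor <;> linarith
          have hlt2 : sx < (v (i+1)).2 := lt_of_le_of_ne hb2.2 hne2
          rw [hAiff i hi]
          exact ⟨(min_le_left _ _).trans (hs2.trans hb2.1), lt_of_lt_of_le hlt2 (le_max_right _ _)⟩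
        have hiff2 := hnoflip i hi sp ((v (i+1)).2) hswin hwv hAs
          (by rw [hX1 i hi]; exact hvert2r (i+1) hi hwv) hactfun
        rw [hX1 i hi] at hiff2
        rw [hlaeq i sp hi hswin hAs]
        by_cases hc : X i sp < z.1
        · rw [if_pos hc, if_pos (hiff2.mp hc)]
        · rw [if_neg hc, if_neg (fun hcc => hc (hiff2.mpr hcc))]
      · have hAs : A i ((v (i+1)).2) ≠ 0 := by
          rw [hAiff i hi]
          exact ⟨min_le_right _ _, lt_of_lt_of_le hgt (le_max_left _ _)⟩
        rw [hlaeq i ((v (i+1)).2) hi hwv hAs, hX1 i hi]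
    -- the jump counters
    set D : ℕ → ℤ := fun k =>
      (if (v k).2 ≤ z'.2 then (1:ℤ) else 0) - (if (v k).2 ≤ z.2 then (1:ℤ) else 0) with hD
    have hD0 : D 0 = 0 := by
      simp only [hD]
      rw [if_pos (by linarith [habs2.2] : (v 0).2 ≤ z'.2), if_pos (by linarith : (v 0).2 ≤ z.2)]
      ring
    have hDm : D m = 0 := by
      simp only [hD]
      rw [if_neg (by push_neg; linarith [habs2.1] : ¬ (v m).2 ≤ z'.2),
          if_neg (by push_neg; linarith : ¬ (v m).2 ≤ z.2)]
      ring
    have hDwin : ∀ k, D k ≠ 0 → |(v k).2 - z.2| < r := by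
      intro k hk
      simp only [hD] at hk
      rw [sub_ne_zero] at hk
      by_cases h1 : (v k).2 ≤ z'.2 <;> by_cases h2 : (v k).2 ≤ z.2
      · exact absurd (by rw [if_pos h1, if_pos h2]) hk
      · rw [abs_sub_lt_iff]
        constructor <;> linarith [habs2.1, not_le.mp h2]
      · rw [abs_sub_lt_iff]
        constructor <;> linarith [habs2.2, not_le.mp h1]
      · exact absurd (by rw [if_neg h1, if_neg h2]) hk
    have hlastep : ∀ k, k + 1 < m → D (k+1) ≠ 0 → la (k+1) = la k := by
      intro k hk hDk
      have hwv := hDwin (k+1) hDk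
      rw [hseg0 (k+1) hk hwv, hseg1 k (by omega) hwv]
    -- telescoping
    have hsum : W z' - W z = ∑ i ∈ Finset.range m, (D i - D (i+1)) * la i := by
      rw [hWzval, hWz'val, ← Finset.sum_sub_distrib]
      apply Finset.sum_congr rfl
      intro i _
      have hre : A i z'.2 - A i z.2 = D i - D (i+1) := by
        simp only [hA, hD]
        ring
      have hre2 : A i z'.2 * la i - A i z.2 * la i = (A i z'.2 - A i z.2) * la i := by ring
      rw [hre2, hre]
    have hm1 : m - 1 + 1 = m := Nat.sub_add_cancel hm
    have hsplit0 : ∑ i ∈ Finset.range m, (D i - D (i+1)) * la i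
        = (∑ i ∈ Finset.range m, D i * la i) - (∑ i ∈ Finset.range m, D (i+1) * la i) := by
      rw [← Finset.sum_sub_distrib]
      apply Finset.sum_congr rfl
      intro i _
      ring
    have hsplit1 : ∑ i ∈ Finset.range m, D i * la i
        = ∑ i ∈ Finset.range (m-1), D (i+1) * la (i+1) := by
      conv_lhs => rw [show m = m - 1 + 1 from hm1.symm]
      rw [Finset.sum_range_succ']
      simp [hD0]
    have hsplit2 : ∑ i ∈ Finset.range m, D (i+1) * la i
        = ∑ i ∈ Finset.range (m-1), D (i+1) * la i := by
      conv_lhs => rw [show m = m - 1 + 1 from hm1.symm]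
      rw [Finset.sum_range_succ]
      rw [hm1, hDm]
      ring
    have hterm : ∀ i ∈ Finset.range (m-1), D (i+1) * la (i+1) = D (i+1) * la i := by
      intro i hi
      rw [Finset.mem_range] at hi
      by_cases hDk : D (i+1) = 0
      · rw [hDk]; ring
      · rw [hlastep i (by omega) hDk]
    have hfinal : W z' - W z = 0 := by
      rw [hsum, hsplit0, hsplit1, hsplit2, Finset.sum_congr rfl hterm]
      ring
    linarith [hfinal]
  -- ================== conclusion via connectedness ==================
  have hall : ∀ z : ℝ × ℝ, z ∈ S → ∃ r : ℝ, 0 < r ∧ ∀ z' : ℝ × ℝ, dist z' z < r → W z' = W z := by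
    intro z hz
    have hz12 := hSband z hz
    have hzG : z ∉ G := by
      intro hzG'
      rcases (hGmem z).mp hzG' with ⟨i, hi, hmem⟩
      exact hdisj i hi z hz hmem
    exact hloc z hz12.1 hz12.2 hzG
  choose rad hrad using hall
  set u : Set (ℝ × ℝ) := ⋃ (z : ℝ × ℝ), ⋃ (hz : z ∈ S), ⋃ (_ : W z = 0), Metric.ball z (rad z hz) with hu
  set w : Set (ℝ × ℝ) := ⋃ (z : ℝ × ℝ), ⋃ (hz : z ∈ S), ⋃ (_ : W z ≠ 0), Metric.ball z (rad z hz) with hw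
  have huo : IsOpen u :=
    isOpen_iUnion fun z => isOpen_iUnion fun hz => isOpen_iUnion fun _ => Metric.isOpen_ball
  have hwo : IsOpen w :=
    isOpen_iUnion fun z => isOpen_iUnion fun hz => isOpen_iUnion fun _ => Metric.isOpen_ball
  have hdisj2 : Disjoint u w := by
    rw [Set.disjoint_left]
    intro p hpu hpw
    simp only [hu, Set.mem_iUnion] at hpu
    simp only [hw, Set.mem_iUnion] at hpw
    obtain ⟨z1, hz1, hWz1, hp1⟩ := hpu
    obtain ⟨z2, hz2, hWz2, hp2⟩ := hpw
    rw [Metric.mem_ball] at hp1 hp2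
    have e1 := (hrad z1 hz1).2 p hp1
    have e2 := (hrad z2 hz2).2 p hp2
    rw [hWz1] at e1
    exact hWz2 (by rw [← e2, e1])
  have hcover : S ⊆ u ∪ w := by
    intro z hz
    by_cases hWz : W z = 0
    · left
      simp only [hu, Set.mem_iUnion]
      exact ⟨z, hz, hWz, Metric.mem_ball_self (hrad z hz).1⟩
    · right
      simp only [hw, Set.mem_iUnion]
      exact ⟨z, hz, hWz, Metric.mem_ball_self (hrad z hz).1⟩
  have hSu : (S ∩ u).Nonempty := by
    refine ⟨a, ha, ?_⟩
    simp only [hu, Set.mem_iUnion]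
    exact ⟨a, ha, hWa, Metric.mem_ball_self (hrad a ha).1⟩
  have hsubu : S ⊆ u := hS.subset_left_of_subset_union huo hwo hdisj2 hcover hSu
  have hbu := hsubu hb
  simp only [hu, Set.mem_iUnion] at hbu
  obtain ⟨z1, hz1, hWz1, hp1⟩ := hbu
  rw [Metric.mem_ball] at hp1
  have hWbz := (hrad z1 hz1).2 b hp1
  rw [hWb, hWz1] at hWbz
  exact one_ne_zero hWbz

set_option maxHeartbeats 2000000 in
/-- **Lemma 6.10.** Under (H₁)–(H₃), for `x ∈ Θ(Ã₀)` the sequence `(f̃⁻ⁿ(Λ₀⁻(x)))_{n∈ℕ}` is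
uniformly bounded to the right. -/
theorem backward_iterates_of_unstable_branch_bounded_right
    (ftil : Equiv.Perm (ℝ × ℝ)) (hftc : Continuous ftil) (hftc' : Continuous ftil.symm)
    (hfI : IsotopicToIdP ftil)
    (hcomm : ∀ z : ℝ × ℝ, ftil (deckT z) = deckT (ftil z))
    (c0 c1 c2 : ℝ) (h01 : c1 < c0) (h12 : c2 < c1)
    (hH1 : ∀ c ∈ ({c0, c1, c2} : Set ℝ), ∀ p : ℝ × ℝ, p.2 = c → (ftil p).2 < c)
    (hH2 : ∀ n : ℕ, 1 ≤ n → ∃ p : ℝ × ℝ, p.2 = c0 ∧ ((ftil ^ n) p).2 = c2)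
    (hTh0 : (ThetaZ ftil (BandAB c0 c1)).Nonempty)
    (hTh1 : (ThetaZ ftil (BandAB c1 c2)).Nonempty)
    (hr0 : rhoB ftil (ThetaZ ftil (BandAB c0 c1)) ⊆ Ioo (0 : EReal) ⊤)
    (hr1 : rhoB ftil (ThetaZ ftil (BandAB c1 c2)) ⊆ Ioo ⊥ (0 : EReal))
    (x : ℝ × ℝ) (hx : x ∈ ThetaZ ftil (BandAB c0 c1)) :
    ∀ M : ℝ, ∃ n0 : ℕ, ∀ n : ℕ, n0 ≤ n →
      (ftil⁻¹ ^ n) '' connectedComponentIn (LamM ftil c0 c1) x ⊆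
        {z : ℝ × ℝ | z ∈ BandAB c0 c1 ∧ z.1 < M} := by
  classical
  have hxIter : ∀ k : ℤ, x ∈ (ftil^k) '' BandAB c0 c1 := by
    intro k
    have := hx
    simp only [ThetaZ, Set.mem_iInter] at this
    exact this k
  -- the homeomorphism
  set F : Homeomorph (ℝ×ℝ) (ℝ×ℝ) :=
    { toEquiv := ftil, continuous_toFun := hftc, continuous_invFun := hftc' } with hF
  have hFc : ∀ p : ℝ×ℝ, F p = ftil p := fun p => rfl
  -- points of the invariant set stay in the band
  have hband_pt : ∀ z : ℝ×ℝ, z ∈ ThetaZ ftil (BandAB c0 c1) → ∀ k : ℤ,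
      (ftil^k) z ∈ BandAB c0 c1 := by
    intro z hz k
    have h1 : z ∈ (ftil^(-k)) '' BandAB c0 c1 := by
      simp only [ThetaZ, Set.mem_iInter] at hz
      exact hz (-k)
    obtain ⟨u, hu, huz⟩ := h1
    have h2 : (ftil^k) z = u := by
      rw [← huz, BIB_zpow_zpow]
      simp
    rw [h2]
    exact hu
  have hxband : x ∈ BandAB c0 c1 := by
    have := hband_pt x hx 0
    simpa using this
  -- HP at c1
  have hHP1 : ∀ p : ℝ×ℝ, p.2 ≤ c1 → (ftil p).2 < c1 := by
    apply BIB_halfplane F c1 (hH1 c1 (by simp))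
    intro hbad
    obtain ⟨z0, hz0⟩ := hTh0
    have hb0 : z0 ∈ BandAB c0 c1 := by
      have := hband_pt z0 hz0 0
      simpa using this
    have hb1 : ftil z0 ∈ BandAB c0 c1 := by
      have := hband_pt z0 hz0 1
      simpa using this
    have hb2 : ftil (ftil z0) ∈ BandAB c0 c1 := by
      have h1 := hband_pt z0 hz0 2
      have h2 : (ftil^(2:ℤ)) z0 = ftil (ftil z0) := by
        show (ftil^((1:ℤ)+1)) z0 = _
        rw [zpow_add, zpow_one, BIB_mul_apply]
      rwa [h2] at h1
    have hz1le : (ftil z0).2 ≤ c1 := by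
      by_contra hgt
      push_neg at hgt
      have hmem : ftil z0 ∈ ⇑F '' {p : ℝ×ℝ | p.2 ≤ c1} := interior_subset (hbad hgt)
      obtain ⟨u, hu, huz⟩ := hmem
      have huz0 : u = z0 := ftil.injective huz
      rw [huz0] at hu
      simp only [Set.mem_setOf_eq] at hu
      have hz0eq : z0.2 = c1 := le_antisymm hu hb0.1
      have := hH1 c1 (by simp) z0 hz0eq
      linarith
    have hz1eq : (ftil z0).2 = c1 := le_antisymm hz1le hb1.1
    have := hH1 c1 (by simp) (ftil z0) hz1eq
    linarith [hb2.1]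
  -- integer horizontal shifts commute with ftil
  have hshiftn : ∀ (k : ℕ) (z : ℝ×ℝ), ftil (z.1 + k, z.2) = ((ftil z).1 + k, (ftil z).2) := by
    intro k
    induction k with
    | zero => intro z; simp
    | succ n ih =>
        intro z
        have h1 : ((z.1 + (n+1 : ℕ), z.2) : ℝ×ℝ) = deckT (z.1 + n, z.2) := by
          show _ = ((z.1 + (n:ℝ)) + 1, z.2)
          rw [Prod.mk.injEq]
          exact ⟨by push_cast; ring, rfl⟩
        rw [h1, hcomm, ih]
        show (((ftil z).1 + (n:ℝ)) + 1, (ftil z).2) = _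
        rw [Prod.mk.injEq]
        exact ⟨by push_cast; ring, rfl⟩
  have hshiftz : ∀ (k : ℤ) (z : ℝ×ℝ), ftil (z.1 + k, z.2) = ((ftil z).1 + k, (ftil z).2) := by
    intro k z
    rcases le_or_gt 0 k with hk | hk
    · obtain ⟨n, rfl⟩ := Int.eq_ofNat_of_zero_le hk
      have := hshiftn n z
      push_cast
      exact_mod_cast this
    · obtain ⟨n, hn⟩ : ∃ n : ℕ, k = -(n:ℤ) := ⟨(-k).toNat, by omega⟩
      subst hn
      have h2 := hshiftn n (z.1 - n, z.2)
      have h3 : ((((z.1 - (n:ℝ), z.2) : ℝ×ℝ).1 + (n:ℝ), ((z.1 - (n:ℝ), z.2) : ℝ×ℝ).2) : ℝ×ℝ) = z := by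
        rw [Prod.mk.injEq]
        exact ⟨by ring, rfl⟩
      rw [h3] at h2
      -- h2 : ftil z = ((ftil (z.1 - n, z.2)).1 + n, (ftil (z.1 - n, z.2)).2)
      have h4 : ((z.1 + ((-(n:ℤ):ℤ)):ℝ), z.2) = ((z.1 - (n:ℝ), z.2) : ℝ×ℝ) := by
        rw [Prod.mk.injEq]
        exact ⟨by push_cast; ring, rfl⟩
      rw [h4, h2]
      rw [Prod.mk.injEq]
      constructor
      · push_cast
        ring
      · rfl
  -- bounded vertical image of the band
  obtain ⟨Y, hY⟩ : ∃ Y : ℝ, ∀ val ∈ (fun p => (ftil p).2) '' ((Set.Icc (0:ℝ) 1) ×ˢ (Set.Icc c1 c0)), val ≤ Y := by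
    have himg : IsCompact ((fun p => (ftil p).2) '' ((Set.Icc (0:ℝ) 1) ×ˢ (Set.Icc c1 c0))) :=
      (isCompact_Icc.prod isCompact_Icc).image (continuous_snd.comp hftc)
    obtain ⟨Y, hY⟩ := himg.bddAbove
    exact ⟨Y, fun val hval => hY hval⟩
  have hYb : ∀ w : ℝ×ℝ, w ∈ BandAB c0 c1 → (ftil w).2 ≤ Y := by
    intro w hw
    set k : ℤ := ⌊w.1⌋ with hk
    have hw' : ((w.1 - (k:ℝ), w.2) : ℝ×ℝ) ∈ (Set.Icc (0:ℝ) 1) ×ˢ (Set.Icc c1 c0) := by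
      constructor
      · constructor
        · simp only
          linarith [Int.floor_le w.1]
        · simp only
          linarith [Int.lt_floor_add_one w.1]
      · exact ⟨hw.1, hw.2⟩
    have h2 := hshiftz k ((w.1 - (k:ℝ), w.2) : ℝ×ℝ)
    have h3 : ((((w.1 - (k:ℝ), w.2) : ℝ×ℝ).1 + (k:ℝ), ((w.1 - (k:ℝ), w.2) : ℝ×ℝ).2) : ℝ×ℝ) = w := by
      rw [Prod.mk.injEq]
      exact ⟨by ring, rfl⟩
    rw [h3] at h2
    have h4 : (ftil w).2 = (ftil ((w.1 - (k:ℝ), w.2) : ℝ×ℝ)).2 := by rw [h2]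
    rw [h4]
    exact hY _ ⟨_, hw', rfl⟩
  -- HP at c0
  have hHP0 : ∀ p : ℝ×ℝ, p.2 ≤ c0 → (ftil p).2 < c0 := by
    apply BIB_halfplane F c0 (hH1 c0 (by simp))
    intro hbad
    have hs2 : c0 < ((0, max c0 Y + 1) : ℝ×ℝ).2 := by
      simp only
      linarith [le_max_left c0 Y]
    have hmem : ((0, max c0 Y + 1) : ℝ×ℝ) ∈ ⇑F '' {p : ℝ×ℝ | p.2 ≤ c0} :=
      interior_subset (hbad hs2)
    obtain ⟨u, hu, huz⟩ := hmem
    simp only [Set.mem_setOf_eq] at hu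
    have hval : (ftil u).2 = max c0 Y + 1 := by
      rw [← hFc, huz]
    rcases lt_or_ge u.2 c1 with h | h
    · have := hHP1 u h.le
      rw [hval] at this
      linarith [le_max_left c0 Y]
    · have := hYb u ⟨h, hu⟩
      rw [hval] at this
      linarith [le_max_right c0 Y]
  -- the open connected T-invariant set U
  set U : Set (ℝ×ℝ) := ⇑ftil '' {p : ℝ×ℝ | c0 < p.2} with hUdef
  have hUopen : IsOpen U := F.isOpenMap _ (isOpen_lt continuous_const continuous_snd)
  have hUconn : IsPreconnected U :=
    ((BIB_conv_gt c0).isPreconnected).image _ hftc.continuousOn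
  have hUtop : ∀ w : ℝ×ℝ, c0 ≤ w.2 → w ∈ U := by
    intro w hw
    refine ⟨ftil.symm w, ?_, by simp⟩
    simp only [Set.mem_setOf_eq]
    by_contra hcon
    push_neg at hcon
    have := hHP0 _ hcon
    rw [Equiv.apply_symm_apply] at this
    linarith
  have hUdisj : ∀ w : ℝ×ℝ, w ∈ ⇑ftil '' {p : ℝ×ℝ | p.2 ≤ c0} → w ∉ U := by
    intro w hw hwU
    obtain ⟨u1, hu1, he1⟩ := hw
    obtain ⟨u2, hu2, he2⟩ := hwU
    have he3 : u1 = u2 := ftil.injective (he1.trans he2.symm)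
    rw [he3] at hu1
    simp only [Set.mem_setOf_eq] at hu1 hu2
    linarith
  have hUinv : ∀ (j : ℤ) (w : ℝ×ℝ), w ∈ U → ((w.1 + (j:ℝ), w.2) : ℝ×ℝ) ∈ U := by
    intro j w hw
    obtain ⟨u, hu, he⟩ := hw
    refine ⟨((u.1 + (j:ℝ), u.2) : ℝ×ℝ), hu, ?_⟩
    rw [hshiftz j u, he]
  -- a point of U below c1
  obtain ⟨p0, hp0c0, hp0c2⟩ := hH2 1 (le_refl 1)
  have hp0 : (ftil p0).2 = c2 := by
    rw [← hp0c2, pow_one]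
  have hcontq : ContinuousAt (fun t : ℝ => (ftil ((p0.1, t) : ℝ×ℝ)).2) c0 := by
    apply Continuous.continuousAt
    exact continuous_snd.comp (hftc.comp (continuous_const.prodMk continuous_id))
  rw [Metric.continuousAt_iff] at hcontq
  obtain ⟨δ, hδ, hδc⟩ := hcontq (c1 - c2) (by linarith)
  have hqy : (ftil ((p0.1, c0 + δ/2) : ℝ×ℝ)).2 < c1 := by
    have hd : dist (c0 + δ/2) c0 < δ := by
      rw [Real.dist_eq]
      rw [abs_of_pos (by linarith)]
      linarith
    have := hδc hd
    have hp0e : ((p0.1, c0) : ℝ×ℝ) = p0 := Prod.ext rfl hp0c0.symm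
    rw [hp0e, hp0] at this
    rw [Real.dist_eq, abs_sub_lt_iff] at this
    linarith [this.1]
  have hqU : (ftil ((p0.1, c0 + δ/2) : ℝ×ℝ)) ∈ U :=
    ⟨(p0.1, c0 + δ/2), by simp only [Set.mem_setOf_eq]; linarith, rfl⟩
  -- the wall
  obtain ⟨m, v, hv0, hvm, hvseg, hvnh⟩ :=
    BIB_polyconn U hUopen hUconn (ftil ((p0.1, c0 + δ/2) : ℝ×ℝ)) ((0, c0+1) : ℝ×ℝ)
      hqU (hUtop _ (by simp only; linarith))
  have hwlow : (v 0).2 < c1 := by rw [hv0]; exact hqy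
  have hwhigh : c0 < (v m).2 := by rw [hvm]; simp only; linarith
  have hm : 1 ≤ m := by
    by_contra hcon
    push_neg at hcon
    have hm0 : m = 0 := by omega
    rw [hm0] at hwhigh
    linarith
  -- extreme abscissas of the wall
  have hvxne : ((Finset.range (m+1)).image (fun i => (v i).1)).Nonempty := by
    refine ⟨(v 0).1, ?_⟩
    rw [Finset.mem_image]
    exact ⟨0, by simp, rfl⟩
  set vxmin : ℝ := ((Finset.range (m+1)).image (fun i => (v i).1)).min' hvxne with hvxmin
  set vxmax : ℝ := ((Finset.range (m+1)).image (fun i => (v i).1)).max' hvxne with hvxmax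
  have hminle : ∀ i, i ≤ m → vxmin ≤ (v i).1 := by
    intro i hi
    apply Finset.min'_le
    rw [Finset.mem_image]
    exact ⟨i, by rw [Finset.mem_range]; omega, rfl⟩
  have hmaxge : ∀ i, i ≤ m → (v i).1 ≤ vxmax := by
    intro i hi
    apply Finset.le_max'
    rw [Finset.mem_image]
    exact ⟨i, by rw [Finset.mem_range]; omega, rfl⟩
  -- x belongs to the unstable set
  have hmemLam : x ∈ LamM ftil c0 c1 := by
    simp only [LamM, Set.mem_iInter]
    intro n
    constructor
    · have h1 : x ∈ (ftil^(n:ℤ)) '' BandAB c0 c1 := hxIter n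
      rw [BIB_pow_natCast] at h1
      exact Set.image_mono (fun p hp => hp.2) h1
    · exact hxband.1
  set C : Set (ℝ×ℝ) := connectedComponentIn (LamM ftil c0 c1) x with hC
  have hxC : x ∈ C := mem_connectedComponentIn hmemLam
  have hCpre : IsPreconnected C := isPreconnected_connectedComponentIn
  have hCLam : C ⊆ LamM ftil c0 c1 := connectedComponentIn_subset _ _
  have hLam_mem : ∀ u ∈ LamM ftil c0 c1, ∀ k : ℕ,
      u ∈ (ftil^k) '' {p : ℝ×ℝ | p.2 ≤ c0} ∧ c1 ≤ u.2 := by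
    intro u hu k
    simp only [LamM, Set.mem_iInter] at hu
    exact ⟨(hu k).1, (hu k).2⟩
  have hinvc : Continuous ⇑(ftil⁻¹) := hftc'
  have hScomp : ∀ n : ℕ, IsPreconnected ((ftil⁻¹ ^ n) '' C) :=
    fun n => hCpre.image _ (BIB_pow_cont ftil⁻¹ hinvc n).continuousOn
  have haS : ∀ n : ℕ, ((ftil⁻¹ ^ n) x) ∈ (ftil⁻¹ ^ n) '' C := fun n => ⟨x, hxC, rfl⟩
  have haBand : ∀ n : ℕ, ((ftil⁻¹ ^ n) x) ∈ BandAB c0 c1 := by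
    intro n
    have h1 := hband_pt x hx (-(n:ℤ))
    rw [← BIB_invpow_eq] at h1
    exact h1
  have hSsub0 : ∀ n : ℕ, ∀ w ∈ (ftil⁻¹ ^ n) '' C, w.2 ≤ c0 := by
    rintro n w ⟨u, huC, hwe⟩
    obtain ⟨u', hu', he'⟩ := (hLam_mem u (hCLam huC) n).1
    have h2 : w = u' := by rw [← hwe, ← he', BIB_invpow_pow]
    rw [h2]
    exact hu'
  have hSU : ∀ n : ℕ, ∀ w ∈ (ftil⁻¹ ^ n) '' C, w ∉ U := by
    rintro n w ⟨u, huC, hwe⟩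
    obtain ⟨u', hu', he'⟩ := (hLam_mem u (hCLam huC) (n+1)).1
    have hwval : w = ftil u' := by rw [← hwe, ← he', BIB_invpow_pow_succ]
    intro hwU
    exact hUdisj w ⟨u', hu', hwval.symm⟩ hwU
  have hSband : ∀ n : ℕ, ∀ w ∈ (ftil⁻¹ ^ n) '' C, w ∈ BandAB c0 c1 := by
    intro n w hwS
    refine ⟨?_, hSsub0 n w hwS⟩
    by_contra hcon
    push_neg at hcon
    rcases Nat.eq_zero_or_pos n with hn0 | hn1
    · subst hn0
      have hwC : w ∈ C := by simpa using hwS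
      have := (hLam_mem w (hCLam hwC) 0).2
      linarith
    · obtain ⟨vv, hvvS, hvv2⟩ : ∃ vv ∈ (ftil⁻¹ ^ n) '' C, vv.2 = c1 := by
        have hIcc : c1 ∈ Set.Icc w.2 (((ftil⁻¹ ^ n) x).2) := ⟨hcon.le, (haBand n).1⟩
        have h2 := (hScomp n).intermediate_value hwS (haS n) continuous_snd.continuousOn hIcc
        obtain ⟨vv, h3, h4⟩ := h2
        exact ⟨vv, h3, h4⟩
      obtain ⟨u, huC, hue⟩ := hvvS
      have hforward : ((ftil^n) vv).2 < c1 := by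
        have hstep : ∀ k : ℕ, ((ftil^(k+1)) vv).2 < c1 := by
          intro k
          induction k with
          | zero =>
              rw [pow_one]
              exact hH1 c1 (by simp) vv hvv2
          | succ j ih =>
              rw [BIB_pow_succ_apply ftil (j+1) vv]
              exact hHP1 _ ih.le
        obtain ⟨k, hk⟩ : ∃ k, n = k + 1 := ⟨n - 1, by omega⟩
        rw [hk]
        exact hstep k
      have h5 : (ftil^n) vv = u := by rw [← hue, BIB_pow_invpow]
      rw [h5] at hforward
      have := (hLam_mem u (hCLam huC) 0).2
      linarith
  -- the backward orbit of x stays in the invariant set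
  have hThetaInv : ∀ n : ℕ, (ftil⁻¹ ^ n) x ∈ ThetaZ ftil (BandAB c0 c1) := by
    intro n
    simp only [ThetaZ, Set.mem_iInter]
    intro k
    obtain ⟨u, hu, he⟩ := hxIter (k + (n:ℤ))
    refine ⟨u, hu, ?_⟩
    rw [← he, BIB_invpow_eq, BIB_zpow_zpow, show (-(n:ℤ) + (k + (n:ℤ))) = k from by ring]
  have hback : ∀ n : ℕ, (ftil^n) ((ftil⁻¹ ^ n) x) = x := fun n => BIB_pow_invpow ftil n x
  -- drift of the backward orbit of x
  have hdrift : ∀ R : ℝ, ∃ n0 : ℕ, ∀ n : ℕ, n0 ≤ n → ((ftil⁻¹ ^ n) x).1 < R := by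
    intro R
    by_contra hcon
    push_neg at hcon
    set Vm : ℕ → Set EReal := fun mm =>
      {e : EReal | ∃ n : ℕ, mm ≤ n ∧ 1 ≤ n ∧ R ≤ ((ftil⁻¹ ^ n) x).1 ∧
        e = (((x.1 - ((ftil⁻¹ ^ n) x).1)/(n:ℝ) : ℝ) : EReal)} with hVm
    have hVmne : ∀ mm, (Vm mm).Nonempty := by
      intro mm
      obtain ⟨n, hn1, hn2⟩ := hcon (max mm 1)
      exact ⟨_, n, le_trans (le_max_left _ _) hn1, le_trans (le_max_right _ _) hn1, hn2, rfl⟩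
    have hVmmono : ∀ mm, Vm (mm+1) ⊆ Vm mm := by
      rintro mm e ⟨n, h1, h2, h3, h4⟩
      exact ⟨n, by omega, h2, h3, h4⟩
    obtain ⟨e, he⟩ := IsCompact.nonempty_iInter_of_sequence_nonempty_isCompact_isClosed
      (fun mm => closure (Vm mm))
      (fun mm => closure_mono (hVmmono mm))
      (fun mm => ((hVmne mm).mono subset_closure))
      isClosed_closure.isCompact
      (fun mm => isClosed_closure)
    rw [Set.mem_iInter] at he
    have herho : e ∈ rhoB ftil (ThetaZ ftil (BandAB c0 c1)) := by
      simp only [rhoB, Set.mem_iInter]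
      intro mm hmm
      refine closure_mono ?_ (he mm)
      rintro e' ⟨n, h1, h2, h3, h4⟩
      apply Set.mem_iUnion₂.mpr
      refine ⟨n, h1, (ftil⁻¹ ^ n) x, hThetaInv n, ?_, ?_⟩
      · rw [hback n]
        exact hx
      · rw [hback n]
        exact h4
    have h0e := hr0 herho
    have h0lt : (0:EReal) < e := h0e.1
    have htop : e < ⊤ := h0e.2
    have hbd : ∀ mm : ℕ, 1 ≤ mm → e ≤ (((max (x.1 - R) 0)/(mm:ℝ) : ℝ) : EReal) := by
      intro mm hmm
      have hsub : Vm mm ⊆ Set.Iic (((max (x.1 - R) 0)/(mm:ℝ) : ℝ) : EReal) := by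
        rintro e' ⟨n, h1, h2, h3, h4⟩
        rw [h4, Set.mem_Iic, EReal.coe_le_coe_iff]
        have hn0 : (0:ℝ) < (n:ℝ) := by exact_mod_cast h2
        have hmm0 : (0:ℝ) < (mm:ℝ) := by exact_mod_cast hmm
        have hnm : (mm:ℝ) ≤ (n:ℝ) := by exact_mod_cast h1
        rcases le_or_gt (x.1 - ((ftil⁻¹ ^ n) x).1) 0 with hneg | hpos
        · have hh1 : (x.1 - ((ftil⁻¹ ^ n) x).1)/(n:ℝ) ≤ 0 :=
            div_nonpos_of_nonpos_of_nonneg hneg hn0.le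
          have hh2 : (0:ℝ) ≤ max (x.1 - R) 0 / (mm:ℝ) :=
            div_nonneg (le_max_right _ _) hmm0.le
          linarith
        · have hle1 : x.1 - ((ftil⁻¹ ^ n) x).1 ≤ max (x.1 - R) 0 :=
            le_trans (by linarith) (le_max_left _ _)
          have hnum : (0:ℝ) ≤ max (x.1 - R) 0 := le_max_right _ _
          calc (x.1 - ((ftil⁻¹ ^ n) x).1)/(n:ℝ) ≤ (max (x.1 - R) 0)/(n:ℝ) := by gcongr
            _ ≤ (max (x.1 - R) 0)/(mm:ℝ) := by gcongr
      exact (closure_minimal hsub isClosed_Iic) (he mm)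
    -- turn e into a real number
    have hebot : e ≠ ⊥ := ne_bot_of_gt h0lt
    lift e to ℝ using ⟨htop.ne, hebot⟩ with er
    have her0 : (0:ℝ) < er := by exact_mod_cast h0lt
    set B : ℝ := max (x.1 - R) 0 with hB
    have hBnn : 0 ≤ B := le_max_right _ _
    set mm : ℕ := ⌈B/er⌉₊ + 1 with hmm
    have hmm1 : 1 ≤ mm := by omega
    have hble := hbd mm hmm1
    rw [EReal.coe_le_coe_iff] at hble
    have hmmgt : B/er < (mm:ℕ) := by
      have := Nat.le_ceil (B/er)
      push_cast [hmm]
      linarith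
    have hmm0 : (0:ℝ) < (mm:ℝ) := by positivity
    rw [div_lt_iff₀ her0] at hmmgt
    rw [le_div_iff₀ hmm0] at hble
    nlinarith
  -- final assembly
  intro M
  set j : ℤ := ⌊M - vxmax⌋ - 1 with hj
  have hjup : vxmax + (j:ℝ) ≤ M - 1 := by
    have := Int.floor_le (M - vxmax)
    have hjc : (j:ℝ) = ((⌊M - vxmax⌋ : ℤ) : ℝ) - 1 := by
      rw [hj]
      push_cast
      ring
    rw [hjc]
    linarith
  have hjdn : M - (vxmax - vxmin) - 2 ≤ vxmin + (j:ℝ) := by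
    have := Int.lt_floor_add_one (M - vxmax)
    have hjc : (j:ℝ) = ((⌊M - vxmax⌋ : ℤ) : ℝ) - 1 := by
      rw [hj]
      push_cast
      ring
    rw [hjc]
    linarith
  obtain ⟨n0, hn0⟩ := hdrift (M - (vxmax - vxmin) - 2)
  refine ⟨n0, ?_⟩
  intro n hn w hwS
  refine ⟨hSband n w hwS, ?_⟩
  by_contra hcon
  push_neg at hcon
  apply BIB_wall_sep m hm (fun i => (((v i).1 + (j:ℝ), (v i).2) : ℝ×ℝ)) ?_ c1 c0 ?_ ?_
    ((ftil⁻¹ ^ n) '' C) (hScomp n) ?_ ?_ ((ftil⁻¹ ^ n) x) w (haS n) hwS ?_ ?_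
  · intro i hi
    exact hvnh i hi
  · exact hwlow
  · exact hwhigh
  · intro z hz
    exact ⟨(hSband n z hz).1, (hSband n z hz).2⟩
  · intro i hi z hz hzseg
    have h2 := BIB_seg_shift (v i) (v (i+1)) (j:ℝ) z hzseg
    have h3 : ((z.1 - (j:ℝ), z.2) : ℝ×ℝ) ∈ U := hvseg i hi h2
    have h4 := hUinv j _ h3
    have h5 : ((((z.1 - (j:ℝ), z.2) : ℝ×ℝ).1 + (j:ℝ), ((z.1 - (j:ℝ), z.2) : ℝ×ℝ).2) : ℝ×ℝ) = z :=
      Prod.ext (by simp) rfl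
    rw [h5] at h4
    exact hSU n z hz h4
  · intro i hi
    have h1 := hn0 n hn
    have h2 := hminle i hi
    show ((ftil⁻¹ ^ n) x).1 < (v i).1 + (j:ℝ)
    linarith
  · intro i hi
    show (v i).1 + (j:ℝ) < w.1
    linarith [hmaxge i hi]
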